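/- Let H be a real Hilbert space, let u, v ∈ H, and let t > 0 satisfy ‖v‖ ≤ t·‖u − v‖. If λ is a real number with 0 ≤ λ ≤ 1 − t², then ‖(1−λ)u + λv‖² ≤ (1 − λ/(t+1))²·‖u‖² and (1 − λ/(t+1))²·‖u‖² ≤ ‖u‖². -/

import Mathlib

/-- In a real Hilbert space, if `‖v‖ ≤ t‖u - v‖` with `t > 0` and
`0 ≤ λ ≤ 1 - t²`, then `‖(1-λ)u + λv‖² ≤ (1 - λ/(t+1))²‖u‖²` and
`(1 - λ/(t+1))²‖u‖² ≤ ‖u‖²`. -/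
theorem stmt_2 {H : Type*} [NormedAddCommGroup H] [InnerProductSpace ℝ H] [CompleteSpace H]
    (u v : H) (t : ℝ) (ht : 0 < t) (h : ‖v‖ ≤ t * ‖u - v‖)
    (lam : ℝ) (hlam0 : 0 ≤ lam) (hlam1 : lam ≤ 1 - t ^ 2) :
    ‖(1 - lam) • u + lam • v‖ ^ 2 ≤ (1 - lam / (t + 1)) ^ 2 * ‖u‖ ^ 2 ∧
      (1 - lam / (t + 1)) ^ 2 * ‖u‖ ^ 2 ≤ ‖u‖ ^ 2 := by
  have ht1 : (0:ℝ) < t + 1 := by linarith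
  set a := ‖u‖ with ha
  set b := ‖u - v‖ with hb
  have ha0 : 0 ≤ a := norm_nonneg _
  have hb0 : 0 ≤ b := norm_nonneg _
  set ip : ℝ := inner ℝ u (u - v) with hip
  have htri : a ≤ (t + 1) * b := by
    calc a = ‖(u - v) + v‖ := by rw [sub_add_cancel]
    _ ≤ b + ‖v‖ := norm_add_le _ _
    _ ≤ b + t * b := by linarith
    _ = (t + 1) * b := by ring
  have hv2 : ‖v‖ ^ 2 ≤ t ^ 2 * b ^ 2 := by nlinarith [norm_nonneg v]
  have hexp1 : ‖v‖ ^ 2 = a ^ 2 - 2 * ip + b ^ 2 := by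
    have hvv : v = u - (u - v) := by abel
    rw [hvv, norm_sub_sq_real]
  have hkey : a ^ 2 + (1 - t ^ 2) * b ^ 2 ≤ 2 * ip := by nlinarith
  have hexp2 : ‖(1 - lam) • u + lam • v‖ ^ 2 = a ^ 2 - 2 * lam * ip + lam ^ 2 * b ^ 2 := by
    have huv : (1 - lam) • u + lam • v = u - lam • (u - v) := by
      rw [smul_sub, sub_smul, one_smul]; abel
    rw [huv, norm_sub_sq_real, real_inner_smul_right, norm_smul,
      Real.norm_eq_abs, abs_of_nonneg hlam0]
    ring
  constructor
  · rw [hexp2]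
    have hdiv : (1 - lam / (t + 1)) ^ 2 * a ^ 2 =
        ((t + 1 - lam) ^ 2 * a ^ 2) / (t + 1) ^ 2 := by
      field_simp
    rw [hdiv, le_div_iff₀ (by positivity)]
    have hm : 0 ≤ lam * (1 - t ^ 2 - lam) :=
      mul_nonneg hlam0 (by linarith)
    have hsq : 0 ≤ (t + 1) ^ 2 * b ^ 2 - a ^ 2 := by nlinarith
    have hipl : lam * (a ^ 2 + (1 - t ^ 2) * b ^ 2) ≤ lam * (2 * ip) :=
      mul_le_mul_of_nonneg_left hkey hlam0
    nlinarith [mul_nonneg hm hsq, mul_nonneg (mul_nonneg hlam0 (le_of_lt ht1)) (le_of_lt ht1)]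
  · have hd0 : 0 ≤ lam / (t + 1) := div_nonneg hlam0 ht1.le
    have hd1 : lam / (t + 1) ≤ 1 := by
      rw [div_le_one ht1]; nlinarith
    nlinarith [mul_nonneg (mul_nonneg hd0 (by linarith : (0:ℝ) ≤ 2 - lam / (t + 1))) (sq_nonneg a)]
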